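/- In type \(C_n\), the \(i\)-th row of the tableau \(T(C_n)\), namely \(H_{\beta_i} = \{t_{i,j} \mid i \le j \le 2n-i\}\), equals the set of positive roots \(\alpha\) with \((\alpha, \beta_i) > 0\) lying in the root subsystem orthogonal to \(\beta_1,\dots,\beta_{i-1}\), and it is a Heisenberg set of centre \(\beta_i = t_{i,i}\). -/
import Mathlib


/-- The standard basis vector `eᵢ` of `ℝ^∞` (1-based indexing). -/
noncomputable def e (i : ℕ) : ℕ → ℝ := fun m => if m = i then 1 else 0

/-- The standard inner product (on vectors supported in `{0,…,n}`). -/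
noncomputable def dotN (n : ℕ) (x y : ℕ → ℝ) : ℝ := ∑ m ∈ Finset.range (n + 1), x m * y m

/-- The simple roots of type `Cₙ`: `αᵢ = eᵢ - eᵢ₊₁` for `i < n` and `αₙ = 2eₙ`. -/
noncomputable def alC (n i : ℕ) : ℕ → ℝ := if i = n then (2 : ℝ) • e n else e i - e (i + 1)

/-- The entry `t_{i,j}` of the shifted tableau `T(Cₙ)`.  In particular the cascade root
`βᵢ` is `t_{i,i} = 2αᵢ + ⋯ + 2α_{n-1} + αₙ`. -/
noncomputable def tC (n i j : ℕ) : ℕ → ℝ :=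
  if j ≤ n - 1 then
    (∑ m ∈ Finset.Ico i j, alC n m) + (2 : ℝ) • (∑ m ∈ Finset.Ico j n, alC n m) + alC n n
  else
    ∑ m ∈ Finset.Icc i (2 * n - j), alC n m

/-- The root system of type `Cₙ`. -/
def DeltaC (n : ℕ) : Set (ℕ → ℝ) :=
  {v | ∃ i j, 1 ≤ i ∧ i ≤ n ∧ 1 ≤ j ∧ j ≤ n ∧
    ((i ≠ j ∧ v = e i - e j) ∨ v = e i + e j ∨ v = -e i - e j)}

/-- The positive roots of type `Cₙ`: `eᵢ - eⱼ`, `eᵢ + eⱼ` (`i < j`) and `2eᵢ`. -/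
def DeltaCpos (n : ℕ) : Set (ℕ → ℝ) :=
  {v | ∃ i j, 1 ≤ i ∧ i ≤ j ∧ j ≤ n ∧ ((i < j ∧ v = e i - e j) ∨ v = e i + e j)}

/-- A subset `Γ` of a root system `Δ` is a Heisenberg set of centre `γ`. -/
def IsHeisenbergSet {V : Type*} [AddCommGroup V] (Δ Γ : Set V) (γ : V) : Prop :=
  Γ ⊆ Δ ∧ γ ∈ Γ ∧ ∀ α ∈ Γ, α ≠ γ → ∃! α', α' ∈ Γ ∧ α + α' = γ

/-- The `i`-th row of the tableau `T(Cₙ)`: `{t_{i,j} ∣ i ≤ j ≤ 2n - i}`. -/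
def rowC (n i : ℕ) : Set (ℕ → ℝ) := {v | ∃ j, i ≤ j ∧ j ≤ 2 * n - i ∧ v = tC n i j}

lemma sum_alC (n : ℕ) : ∀ a b : ℕ, a ≤ b → b ≤ n →
    ∑ m ∈ Finset.Ico a b, alC n m = e a - e b := by
  intro a b hab
  induction b, hab using Nat.le_induction with
  | base => intro _; simp
  | succ b hb ih =>
    intro hbn
    rw [Finset.sum_Ico_succ_top hb, ih (by omega)]
    have h : alC n b = e b - e (b + 1) := by unfold alC; rw [if_neg (by omega)]
    rw [h]; abel

lemma alC_top (n : ℕ) : alC n n = (2 : ℝ) • e n := by unfold alC; rw [if_pos rfl]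

lemma tC_plus (n i j : ℕ) (hi : 1 ≤ i) (hij : i ≤ j) (hj : j ≤ n) :
    tC n i j = e i + e j := by
  unfold tC
  by_cases h : j ≤ n - 1
  · rw [if_pos h, sum_alC n i j hij hj, sum_alC n j n (by omega) le_rfl, alC_top]
    funext m
    simp only [Pi.add_apply, Pi.sub_apply, Pi.smul_apply, smul_eq_mul]
    ring
  · rw [if_neg h]
    have hjn : n = j := by omega
    subst hjn
    rw [show 2 * n - n = n from by omega, ← Finset.Ico_add_one_right_eq_Icc,
      Finset.sum_Ico_succ_top (by omega), sum_alC n i n (by omega) le_rfl, alC_top]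
    funext m
    simp only [Pi.add_apply, Pi.sub_apply, Pi.smul_apply, smul_eq_mul]
    ring

lemma tC_minus (n i j : ℕ) (hi : 1 ≤ i) (hin : i ≤ n) (h1 : n < j) (h2 : j ≤ 2 * n - i) :
    tC n i j = e i - e (2 * n - j + 1) := by
  unfold tC
  rw [if_neg (by omega), ← Finset.Ico_add_one_right_eq_Icc,
    sum_alC n i (2 * n - j + 1) (by omega) (by omega)]

lemma rowC_char (n i : ℕ) (hi : 1 ≤ i) (hin : i ≤ n) :
    rowC n i = {v | ∃ j, i ≤ j ∧ j ≤ n ∧ (v = e i + e j ∨ (i < j ∧ v = e i - e j))} := by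
  ext v
  constructor
  · rintro ⟨j, hij, hj2, rfl⟩
    by_cases hj : j ≤ n
    · exact ⟨j, hij, hj, Or.inl (tC_plus n i j hi hij hj)⟩
    · refine ⟨2 * n - j + 1, by omega, by omega, Or.inr ⟨by omega, ?_⟩⟩
      exact tC_minus n i j hi hin (by omega) hj2
  · rintro ⟨j, hij, hj, h | ⟨hlt, h⟩⟩
    · exact ⟨j, hij, by omega, by rw [h, tC_plus n i j hi hij hj]⟩
    · refine ⟨2 * n - j + 1, by omega, by omega, ?_⟩
      rw [h, tC_minus n i (2 * n - j + 1) hi hin (by omega) (by omega),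
        show 2 * n - (2 * n - j + 1) + 1 = j from by omega]

lemma dotN_center (n i : ℕ) (hi : i ≤ n) (v : ℕ → ℝ) :
    dotN n v (e i + e i) = 2 * v i := by
  unfold dotN
  have h : ∀ m ∈ Finset.range (n + 1), v m * (e i + e i) m
      = if m = i then 2 * v m else 0 := by
    intro m _
    by_cases h : m = i <;> simp [e, h] <;> ring
  rw [Finset.sum_congr rfl h,
    Finset.sum_ite_eq' (Finset.range (n + 1)) i (fun m => 2 * v m),
    if_pos (Finset.mem_range.mpr (by omega))]

/-- In type `Cₙ`, the `i`-th row of `T(Cₙ)` equals the set `H_{βᵢ}` of positive roots `α`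
with `(α, βᵢ) > 0` lying in the subsystem orthogonal to `β₁, …, β_{i-1}`, and it is a
Heisenberg set of centre `βᵢ = t_{i,i}`. -/
theorem rowC_eq_H_and_isHeisenbergSet (n i : ℕ) (hn : 3 ≤ n) (hi : 1 ≤ i) (hin : i ≤ n) :
    rowC n i = {v ∈ DeltaCpos n | 0 < dotN n v (tC n i i) ∧
        ∀ k, 1 ≤ k → k < i → dotN n v (tC n k k) = 0} ∧
    IsHeisenbergSet (DeltaC n) (rowC n i) (tC n i i) := by
  have hcen : tC n i i = e i + e i := tC_plus n i i hi le_rfl hin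
  constructor
  · rw [rowC_char n i hi hin]
    ext v
    simp only [Set.mem_setOf_eq, Set.mem_sep_iff]
    constructor
    · rintro ⟨j, hij, hj, h | ⟨hlt, h⟩⟩
      · subst h
        refine ⟨⟨i, j, hi, hij, hj, Or.inr rfl⟩, ?_, ?_⟩
        · rw [hcen, dotN_center n i hin]
          simp only [Pi.add_apply, e]
          split_ifs <;> norm_num
        · intro k hk hki
          rw [tC_plus n k k hk le_rfl (by omega), dotN_center n k (by omega)]
          simp [e, show k ≠ i from by omega, show k ≠ j from by omega]
      · subst h
        refine ⟨⟨i, j, hi, by omega, hj, Or.inl ⟨hlt, rfl⟩⟩, ?_, ?_⟩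
        · rw [hcen, dotN_center n i hin]
          simp [e, show i ≠ j from by omega]
        · intro k hk hki
          rw [tC_plus n k k hk le_rfl (by omega), dotN_center n k (by omega)]
          simp [e, show k ≠ i from by omega, show k ≠ j from by omega]
    · rintro ⟨⟨a, b, ha, hab, hb, hv⟩, hpos, hzero⟩
      rw [hcen, dotN_center n i hin] at hpos
      have hz : ∀ k, 1 ≤ k → k < i → v k = 0 := by
        intro k hk hki
        have h := hzero k hk hki
        rw [tC_plus n k k hk le_rfl (by omega), dotN_center n k (by omega)] at h
        linarith
      rcases hv with ⟨hab', rfl⟩ | rfl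
      · have hia : a = i := by
          rcases Nat.lt_trichotomy a i with h | h | h
          · have h0 := hz a ha h
            simp [e, show a ≠ b from by omega] at h0
          · exact h
          · exfalso
            simp [e, show i ≠ a from by omega, show i ≠ b from by omega] at hpos
        subst hia
        exact ⟨b, by omega, hb, Or.inr ⟨hab', rfl⟩⟩
      · have hia : a = i := by
          rcases Nat.lt_trichotomy a i with h | h | h
          · have h0 := hz a ha h
            rcases eq_or_ne a b with h' | h' <;> simp [e, h'] at h0
          · exact h
          · exfalso
            simp [e, show i ≠ a from by omega, show i ≠ b from by omega] at hpos
        subst hia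
        exact ⟨b, hab, hb, Or.inl rfl⟩
  · rw [hcen, rowC_char n i hi hin]
    refine ⟨?_, ⟨i, le_rfl, hin, Or.inl rfl⟩, ?_⟩
    · rintro v ⟨j, hij, hj, h | ⟨hlt, h⟩⟩
      · exact ⟨i, j, hi, hin, by omega, hj, Or.inr (Or.inl h)⟩
      · exact ⟨i, j, hi, hin, by omega, hj, Or.inl ⟨by omega, h⟩⟩
    · rintro α ⟨j, hij, hj, h | ⟨hlt, h⟩⟩ hne
      · have hji : i < j := by
          rcases eq_or_lt_of_le hij with h' | h'
          · exact absurd (by rw [h, ← h']) hne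
          · exact h'
        have hsum : α + (e i - e j) = e i + e i := by rw [h]; abel
        exact ⟨e i - e j, ⟨⟨j, hij, hj, Or.inr ⟨hji, rfl⟩⟩, hsum⟩,
          fun y hy => add_left_cancel (hy.2.trans hsum.symm)⟩
      · have hsum : α + (e i + e j) = e i + e i := by rw [h]; abel
        exact ⟨e i + e j, ⟨⟨j, hij, hj, Or.inl rfl⟩, hsum⟩,
          fun y hy => add_left_cancel (hy.2.trans hsum.symm)⟩
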